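/- In the two-source game, if u_1 = n_1 and u_2 < n_2 (all users of s_1 direct, some user of s_2 relays through s_1), then the profile cannot be a Nash equilibrium. -/
import Mathlib


/-- Nash-equilibrium property for the two-source loss network.  Source `s_1` has
`u1` direct users and `v2` users relaying via `s_2`; source `s_2` has `u2` direct
users and `v1` users relaying via `s_1`.  Traffic rates are `T1 = u1 φ + v1 q̄ φ`
and `T2 = u2 φ + v2 q̄ φ` with `q̄ = 1 - q`.  The four conditions state that no
direct user and no relaying user can strictly decrease its loss rate by switching
its route (target traffic adjusted for the deviating user's own flow). -/
noncomputable def NE2 (φ μ q : ℝ) (u1 v1 u2 v2 : ℕ) : Prop :=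
  (0 < u1 →
      φ * ((u1 : ℝ) * φ + (v1 : ℝ) * (1 - q) * φ) /
          ((u1 : ℝ) * φ + (v1 : ℝ) * (1 - q) * φ + μ) ≤
        q * φ + (1 - q) * φ *
            ((u2 : ℝ) * φ + ((v2 : ℝ) + 1) * (1 - q) * φ) /
          ((u2 : ℝ) * φ + ((v2 : ℝ) + 1) * (1 - q) * φ + μ)) ∧
  (0 < v2 →
      q * φ + (1 - q) * φ *
          ((u2 : ℝ) * φ + (v2 : ℝ) * (1 - q) * φ) /
          ((u2 : ℝ) * φ + (v2 : ℝ) * (1 - q) * φ + μ) ≤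
        φ * (((u1 : ℝ) + 1) * φ + (v1 : ℝ) * (1 - q) * φ) /
          (((u1 : ℝ) + 1) * φ + (v1 : ℝ) * (1 - q) * φ + μ)) ∧
  (0 < u2 →
      φ * ((u2 : ℝ) * φ + (v2 : ℝ) * (1 - q) * φ) /
          ((u2 : ℝ) * φ + (v2 : ℝ) * (1 - q) * φ + μ) ≤
        q * φ + (1 - q) * φ *
            ((u1 : ℝ) * φ + ((v1 : ℝ) + 1) * (1 - q) * φ) /
          ((u1 : ℝ) * φ + ((v1 : ℝ) + 1) * (1 - q) * φ + μ)) ∧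
  (0 < v1 →
      q * φ + (1 - q) * φ *
          ((u1 : ℝ) * φ + (v1 : ℝ) * (1 - q) * φ) /
          ((u1 : ℝ) * φ + (v1 : ℝ) * (1 - q) * φ + μ) ≤
        φ * (((u2 : ℝ) + 1) * φ + (v2 : ℝ) * (1 - q) * φ) /
          (((u2 : ℝ) + 1) * φ + (v2 : ℝ) * (1 - q) * φ + μ))

/-- In the two-source game (with `n1 ≥ n2 ≥ 1`, `u1 + v2 = n1`, `u2 + v1 = n2`),
if `u1 = n1` and `u2 < n2` (all users of `s_1` direct, some user of `s_2` relays
through `s_1`), then the profile cannot be a Nash equilibrium. -/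
theorem two_source_not_NE_case1a (φ μ q : ℝ) (hφ : 0 < φ) (hμ : 0 < μ)
    (hq0 : 0 < q) (hq1 : q < 1) (n1 n2 u1 v1 u2 v2 : ℕ)
    (hn : n2 ≤ n1) (hn2 : 1 ≤ n2) (h1 : u1 + v2 = n1) (h2 : u2 + v1 = n2)
    (hu1 : u1 = n1) (hu2 : u2 < n2) :
    ¬ NE2 φ μ q u1 v1 u2 v2 := by
  have hv2 : v2 = 0 := by omega
  have hv1 : 0 < v1 := by omega
  subst hv2
  intro hNE
  have h4 := hNE.2.2.2 hv1
  push_cast at h4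
  set a : ℝ := (u1 : ℝ) * φ + (v1 : ℝ) * (1 - q) * φ with ha
  set b : ℝ := ((u2 : ℝ) + 1) * φ + 0 * (1 - q) * φ with hb
  have hq' : (0:ℝ) < 1 - q := by linarith
  have hbpos : 0 < b := by
    have : (0:ℝ) ≤ (u2 : ℝ) := Nat.cast_nonneg _
    rw [hb]; nlinarith
  have hba : b ≤ a := by
    have hu1' : ((u2 : ℝ) + 1) ≤ (u1 : ℝ) := by
      have : u2 + 1 ≤ u1 := by omega
      exact_mod_cast this
    have hv1' : (0:ℝ) ≤ (v1 : ℝ) := Nat.cast_nonneg _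
    rw [ha, hb]
    nlinarith [mul_le_mul_of_nonneg_right hu1' hφ.le,
      mul_nonneg (mul_nonneg hv1' hq'.le) hφ.le]
  have hapos : 0 < a := lt_of_lt_of_le hbpos hba
  have hy1 : b / (b + μ) < 1 := by
    rw [div_lt_one (by linarith)]; linarith
  have hxy : b / (b + μ) ≤ a / (a + μ) := by
    rw [div_le_div_iff₀ (by linarith) (by linarith)]
    nlinarith
  have hy0 : 0 ≤ b / (b + μ) := by positivity
  rw [mul_div_assoc, mul_div_assoc] at h4
  nlinarith [mul_le_mul_of_nonneg_left hxy (le_of_lt (mul_pos hq' hφ)),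
    mul_pos (mul_pos hq0 hφ) (sub_pos.mpr hy1)]
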